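/- Let n > 1, q a prime power, Tr(x) = x + x^q + ⋯ + x^{q^{n−1}} the trace from F_{q^n} to F_q, and g ∈ F_q[x]. Then f(x) = x^q − x + g(Tr(x)) is a permutation of F_{q^n} if and only if gcd(n, q) = 1 and g is a permutation of F_q. -/

import Mathlib

open Polynomial Finset Function

/-- Theorem 4.2 (criterion): `f(x) = x^q − x + g(Tr(x))` is a permutation of `F_{q^n}`
iff `gcd(n, q) = 1` and `g` permutes `F_q`. -/
theorem trace_pp_criterion (K L : Type) [Field K] [Fintype K] [Field L] [Fintype L]
    [Algebra K L]
    (n : ℕ) (hn : 1 < n) (hL : Fintype.card L = Fintype.card K ^ n)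
    (T : L → L)
    (hT : ∀ x : L, T x = ∑ i ∈ Finset.range n, x ^ Fintype.card K ^ i)
    (g : Polynomial K)
    (f : L → L)
    (hf : ∀ x : L, f x = x ^ Fintype.card K - x + Polynomial.aeval (T x) g) :
    Function.Bijective f ↔
      (Nat.gcd n (Fintype.card K) = 1 ∧
        Function.Bijective (fun c : K => Polynomial.eval c g)) := by
  classical
  set q := Fintype.card K with hqdef
  have hq : 1 < q := Fintype.one_lt_card
  set p := ringChar K with hpdef
  haveI : CharP K p := ringChar.charP K
  obtain ⟨m, hp, hqp⟩ := FiniteField.card K p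
  haveI : Fact p.Prime := ⟨hp⟩
  haveI hCL : CharP L p := charP_of_injective_algebraMap (algebraMap K L).injective p
  haveI : ExpChar L p := ExpChar.prime hp
  have hinj := (algebraMap K L).injective
  -- the Frobenius `x ↦ x ^ q` as a ring hom
  set φ : L →+* L := iterateFrobenius L p m with hφdef
  have hφ : ∀ x : L, φ x = x ^ q := by
    intro x; rw [hφdef, iterateFrobenius_def, ← hqp]
  have hφi : ∀ (i : ℕ) (x : L), x ^ q ^ i = φ^[i] x := by
    intro i
    induction i with
    | zero => intro x; simp
    | succ i ih =>
      intro x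
      have : x ^ q ^ (i + 1) = (x ^ q) ^ q ^ i := by
        rw [← pow_mul, ← pow_succ']
      rw [this, ih (x ^ q), ← hφ, Function.iterate_succ_apply]
  -- `x ^ q ^ n = x`
  have hxqn : ∀ x : L, x ^ q ^ n = x := by
    intro x; rw [← hL]; exact FiniteField.pow_card x
  -- shift lemma
  have hshift : ∀ x : L, ∑ i ∈ Finset.range n, x ^ q ^ (i + 1) = T x := by
    intro x
    have h1 := Finset.sum_range_succ (fun i => x ^ q ^ i) n
    have h2 := Finset.sum_range_succ' (fun i => x ^ q ^ i) n
    have h3 : (∑ i ∈ Finset.range n, x ^ q ^ (i + 1)) + x ^ q ^ 0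
        = (∑ i ∈ Finset.range n, x ^ q ^ i) + x ^ q ^ n := h2.symm.trans h1
    rw [hxqn, pow_zero, pow_one] at h3
    rw [hT]
    exact add_right_cancel h3
  -- T is additive / subtractive
  have hTsub : ∀ x y : L, T (x - y) = T x - T y := by
    intro x y
    simp only [hT, hφi]
    rw [← Finset.sum_sub_distrib]
    refine Finset.sum_congr rfl fun i _ => ?_
    exact iterate_map_sub φ i x y
  have hTadd : ∀ x y : L, T (x + y) = T x + T y := by
    intro x y
    simp only [hT, hφi]
    rw [← Finset.sum_add_distrib]
    refine Finset.sum_congr rfl fun i _ => ?_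
    exact iterate_map_add φ i x y
  -- T x is fixed by Frobenius
  have hTfix : ∀ x : L, (T x) ^ q = T x := by
    intro x
    rw [← hφ, hT, map_sum]
    have : ∀ i ∈ Finset.range n, φ (x ^ q ^ i) = x ^ q ^ (i + 1) := by
      intro i _
      rw [hφi i x, ← Function.iterate_succ_apply' φ i x, ← hφi (i + 1) x]
    rw [Finset.sum_congr rfl this, hshift, hT]
  -- value of T on Frobenius-fixed points
  have hfixpow : ∀ a : L, a ^ q = a → ∀ i, a ^ q ^ i = a := by
    intro a ha i
    rw [hφi]
    exact Function.iterate_fixed (by rw [hφ, ha]) i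
  have hfixT : ∀ a : L, a ^ q = a → T a = (n : L) * a := by
    intro a ha
    rw [hT]
    rw [Finset.sum_congr rfl (fun i _ => hfixpow a ha i)]
    simp [Finset.sum_const, nsmul_eq_mul]
  -- algebraMap values are fixed
  have halgfix : ∀ c : K, (algebraMap K L c) ^ q = algebraMap K L c := by
    intro c; rw [← map_pow, FiniteField.pow_card]
  -- aeval at fixed points is fixed
  have haevalfix : ∀ a : L, a ^ q = a → (aeval a g) ^ q = aeval a g := by
    intro a ha
    rw [← hφ, Polynomial.aeval_eq_sum_range (R := K), map_sum]
    refine Finset.sum_congr rfl fun i _ => ?_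
    simp only [Algebra.smul_def]
    rw [map_mul, map_pow, hφ, hφ, ha, halgfix]
  -- T of x^q
  have hTq : ∀ x : L, T (x ^ q) = T x := by
    intro x
    rw [hT]
    have : ∀ i ∈ Finset.range n, (x ^ q) ^ q ^ i = x ^ q ^ (i + 1) := by
      intro i _
      rw [← pow_mul, ← pow_succ']
    rw [Finset.sum_congr rfl this, hshift]
  -- key identity : T (f x) = n * aeval (T x) g
  have hTf : ∀ x : L, T (f x) = (n : L) * aeval (T x) g := by
    intro x
    rw [hf, hTadd, hTsub, hTq, sub_self, zero_add]
    exact hfixT _ (haevalfix _ (hTfix x))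
  -- fixed field is the image of K
  have hfixed_mem : ∀ a : L, a ^ q = a → ∃ c : K, algebraMap K L c = a := by
    set S : Finset L := Finset.univ.filter (fun a => a ^ q = a) with hS
    set I : Finset L := Finset.univ.image (algebraMap K L) with hI
    have hIS : I ⊆ S := by
      intro a ha
      simp only [hI, Finset.mem_image] at ha
      obtain ⟨c, -, rfl⟩ := ha
      simp [hS, halgfix c]
    have hcardI : I.card = q := by
      rw [hI, Finset.card_image_of_injective _ hinj, Finset.card_univ]
    have hSroots : S ⊆ (X ^ q - X : L[X]).roots.toFinset := by
      intro a ha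
      simp only [hS, Finset.mem_filter] at ha
      rw [Multiset.mem_toFinset, Polynomial.mem_roots']
      refine ⟨FiniteField.X_pow_card_sub_X_ne_zero L hq, ?_⟩
      simp [Polynomial.IsRoot, sub_eq_zero, ha.2]
    have hcardS : S.card ≤ q := by
      calc S.card ≤ _ := Finset.card_le_card hSroots
        _ ≤ Multiset.card (X ^ q - X : L[X]).roots := Multiset.toFinset_card_le _
        _ ≤ (X ^ q - X : L[X]).natDegree := Polynomial.card_roots' _
        _ = q := FiniteField.X_pow_card_sub_X_natDegree_eq L hq
    have hSI : I = S := Finset.eq_of_subset_of_card_le hIS (by rw [hcardI]; exact hcardS)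
    intro a ha
    have haS : a ∈ S := by simp [hS, ha]
    rw [← hSI, hI, Finset.mem_image] at haS
    obtain ⟨c, -, hc⟩ := haS
    exact ⟨c, hc⟩
  -- surjectivity of T onto the image of K
  have hTsurj : ∀ c : K, ∃ x : L, T x = algebraMap K L c := by
    -- T as an additive monoid hom
    have hT0 : T 0 = 0 := by
      rw [hT]
      refine Finset.sum_eq_zero fun i _ => ?_
      exact zero_pow (pow_ne_zero i (by omega))
    set Th : L →+ L := ⟨⟨T, hT0⟩, fun a b => hTadd a b⟩ with hThdef
    -- the kernel is contained in the roots of Q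
    set Q : L[X] := ∑ i ∈ Finset.range n, X ^ q ^ i with hQ
    have hQeval : ∀ x : L, Q.eval x = T x := by
      intro x
      rw [hQ, Polynomial.eval_finset_sum, hT]
      simp
    have hQdeg : Q.natDegree ≤ q ^ (n - 1) := by
      refine Polynomial.natDegree_sum_le_of_forall_le _ _ fun i hi => ?_
      rw [Polynomial.natDegree_X_pow]
      exact Nat.pow_le_pow_right (by omega) (by
        simp only [Finset.mem_range] at hi; omega)
    have hQne : Q ≠ 0 := by
      intro h0
      have hc : Q.coeff (q ^ (n - 1)) = 1 := by
        rw [hQ, Polynomial.finset_sum_coeff]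
        rw [Finset.sum_eq_single (n - 1)]
        · simp [Polynomial.coeff_X_pow]
        · intro i hi hine
          rw [Polynomial.coeff_X_pow, if_neg]
          intro h
          exact hine (Nat.pow_right_injective hq h).symm
        · intro h
          exact absurd (Finset.mem_range.mpr (by omega)) h
      rw [h0] at hc
      simp at hc
    have hkersub : (Th.ker : Set L) ⊆ ↑(Q.roots.toFinset) := by
      intro a ha
      have : T a = 0 := ha
      simp only [Finset.coe_sort_coe, Multiset.mem_toFinset, Finset.mem_coe]
      rw [Polynomial.mem_roots']
      exact ⟨hQne, by rw [Polynomial.IsRoot, hQeval, this]⟩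
    have hkercard : Nat.card Th.ker ≤ q ^ (n - 1) := by
      calc Nat.card Th.ker = (Th.ker : Set L).ncard := Nat.card_coe_set_eq _
        _ ≤ (↑(Q.roots.toFinset) : Set L).ncard := Set.ncard_le_ncard hkersub (Set.toFinite _)
        _ = (Q.roots.toFinset).card := Set.ncard_coe_finset _
        _ ≤ Multiset.card Q.roots := Multiset.toFinset_card_le _
        _ ≤ Q.natDegree := Polynomial.card_roots' _
        _ ≤ q ^ (n - 1) := hQdeg
    have hcardmul : Nat.card Th.range * Nat.card Th.ker = q ^ n := by
      have h1 := AddSubgroup.card_eq_card_quotient_mul_card_addSubgroup Th.ker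
      have h2 : Nat.card (L ⧸ Th.ker) = Nat.card Th.range :=
        Nat.card_congr (QuotientAddGroup.quotientKerEquivRange Th).toEquiv
      rw [h2] at h1
      rw [← h1, Nat.card_eq_fintype_card, hL]
    have hkerpos : 0 < Nat.card Th.ker := Nat.card_pos
    have hpow0 : 0 < q ^ (n - 1) := pow_pos (by omega) _
    have hrangecard : q ≤ Nat.card Th.range := by
      have h4 : q * q ^ (n - 1) ≤ Nat.card Th.range * q ^ (n - 1) := by
        calc q * q ^ (n - 1) = q ^ n := by
              rw [← pow_succ']
              congr 1
              omega
          _ = Nat.card Th.range * Nat.card Th.ker := hcardmul.symm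
          _ ≤ Nat.card Th.range * q ^ (n - 1) := Nat.mul_le_mul_left _ hkercard
      exact Nat.le_of_mul_le_mul_right h4 hpow0
    -- range is contained in the image of K, which has exactly q elements
    have hrangesub : (Th.range : Set L) ⊆ Set.range (algebraMap K L) := by
      rintro a ⟨x, rfl⟩
      obtain ⟨c, hc⟩ := hfixed_mem (T x) (hTfix x)
      exact ⟨c, hc⟩
    have hrangeeq : (Th.range : Set L) = Set.range (algebraMap K L) := by
      refine Set.eq_of_subset_of_ncard_le hrangesub ?_ (Set.toFinite _)
      have h1 : (Set.range (algebraMap K L)).ncard = q := by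
        rw [← Nat.card_coe_set_eq, Nat.card_range_of_injective hinj,
          Nat.card_eq_fintype_card]
      rw [h1, ← Nat.card_coe_set_eq]
      exact hrangecard
    intro c
    have : algebraMap K L c ∈ (Th.range : Set L) := by
      rw [hrangeeq]; exact ⟨c, rfl⟩
    obtain ⟨x, hx⟩ := this
    exact ⟨x, hx⟩
  -- p divides n iff gcd ≠ 1
  have hpq : p ∣ q := by rw [hqdef, hqp]; exact dvd_pow_self p m.ne_zero
  have hgcd_iff : Nat.gcd n q ≠ 1 → p ∣ n := by
    intro hgcd
    have hr : (Nat.gcd n q).minFac.Prime := Nat.minFac_prime hgcd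
    have hrn : (Nat.gcd n q).minFac ∣ n := (Nat.minFac_dvd _).trans (Nat.gcd_dvd_left _ _)
    have hrq : (Nat.gcd n q).minFac ∣ q := (Nat.minFac_dvd _).trans (Nat.gcd_dvd_right _ _)
    have hrp : (Nat.gcd n q).minFac = p := by
      have : (Nat.gcd n q).minFac ∣ p ^ (m : ℕ) := hqp ▸ hrq
      exact (Nat.prime_dvd_prime_iff_eq hr hp).mp (hr.dvd_of_dvd_pow this)
    exact hrp ▸ hrn
  have hgcd_ndvd : Nat.gcd n q = 1 → ¬ p ∣ n := by
    intro h1 hpn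
    have : p ∣ Nat.gcd n q := Nat.dvd_gcd hpn hpq
    rw [h1, Nat.dvd_one] at this
    exact hp.one_lt.ne' this
  constructor
  · intro hbij
    have hgcd : Nat.gcd n q = 1 := by
      by_contra hgcd
      have hpn : p ∣ n := hgcd_iff hgcd
      have hnL : (n : L) = 0 := (CharP.cast_eq_zero_iff L p n).mpr hpn
      obtain ⟨x₀, hx₀⟩ := hTsurj 1
      obtain ⟨y, hy⟩ := hbij.surjective x₀
      have h1 := hTf y
      rw [hy, hx₀, hnL, zero_mul, map_one] at h1
      exact one_ne_zero h1
    refine ⟨hgcd, ?_⟩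
    have hnK : (n : K) ≠ 0 := by
      intro h
      exact hgcd_ndvd hgcd ((CharP.cast_eq_zero_iff K p n).mp h)
    rw [← Finite.surjective_iff_bijective]
    intro d
    obtain ⟨w, hw⟩ := hTsurj ((n : K) * d)
    obtain ⟨x, hx⟩ := hbij.surjective w
    have h1 := hTf x
    rw [hx, hw] at h1
    obtain ⟨c, hc⟩ := hfixed_mem (T x) (hTfix x)
    rw [← hc, aeval_algebraMap_apply_eq_algebraMap_eval] at h1
    have h2 : algebraMap K L ((n : K) * d) = algebraMap K L ((n : K) * eval c g) := by
      rw [h1, map_mul, map_natCast]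
    have h3 : (n : K) * d = (n : K) * eval c g := hinj h2
    exact ⟨c, (mul_left_cancel₀ hnK h3).symm⟩
  · rintro ⟨hgcd, hg⟩
    have hnL : (n : L) ≠ 0 := by
      intro h
      exact hgcd_ndvd hgcd ((CharP.cast_eq_zero_iff L p n).mp h)
    rw [← Finite.injective_iff_bijective]
    intro x y hxy
    have h1 : T (f x) = T (f y) := by rw [hxy]
    rw [hTf, hTf] at h1
    have h2 : aeval (T x) g = aeval (T y) g := mul_left_cancel₀ hnL h1
    obtain ⟨c₁, hc₁⟩ := hfixed_mem (T x) (hTfix x)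
    obtain ⟨c₂, hc₂⟩ := hfixed_mem (T y) (hTfix y)
    rw [← hc₁, ← hc₂, aeval_algebraMap_apply_eq_algebraMap_eval,
      aeval_algebraMap_apply_eq_algebraMap_eval] at h2
    have hcc : c₁ = c₂ := hg.injective (hinj h2)
    have hTxy : T x = T y := by rw [← hc₁, ← hc₂, hcc]
    have h3 : x ^ q - x = y ^ q - y := by
      have h4 := hxy
      rw [hf, hf, hTxy] at h4
      exact add_right_cancel h4
    have hz : (x - y) ^ q = x - y := by
      rw [← hφ, map_sub, hφ, hφ]
      rw [sub_eq_sub_iff_sub_eq_sub] at h3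
      rw [h3]
    have hTz : T (x - y) = 0 := by rw [hTsub, hTxy, sub_self]
    have h5 := hfixT _ hz
    rw [hTz] at h5
    have h6 : x - y = 0 := by
      rcases mul_eq_zero.mp h5.symm with h | h
      · exact absurd h hnL
      · exact h
    exact sub_eq_zero.mp h6
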